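/- With the setting of the previous statement (distinct reals $L_1,\ldots,L_n$, $\beta\in(0.5,1)$, $0<\varepsilon_n<(n-\lceil n\beta\rceil+1)^{-1}$), define the Type 1 CVaR estimator $\widehat{CV1}_n=\min_{\alpha\in\mathbb{R}}\big[(1-\varepsilon_n)\alpha+\frac{1}{n-\lceil n\beta\rceil+1}\sum_{i=1}^n(L_i-\alpha)^+\big]$ and the Type 2 CVaR estimator $\widehat{CV2}_n=\frac{1}{n-\lceil n\beta\rceil+1}\sum_{i=1}^n L_i\,\mathbb{1}(L_i\ge L_{(\lceil n\beta\rceil)})$. Then $\widehat{CV2}_n=\widehat{CV1}_n+\varepsilon_n L_{(\lceil n\beta\rceil)}$. -/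
import Mathlib


/-- With distinct reals `L`, `β ∈ (0.5,1)`, `0 < ε < (n-⌈nβ⌉+1)⁻¹`,
the Type 1 CVaR estimator `CV1 = min_α [(1-ε)α + (n-⌈nβ⌉+1)⁻¹ ∑ᵢ (Lᵢ-α)⁺]` and the
Type 2 estimator `CV2 = (n-⌈nβ⌉+1)⁻¹ ∑ᵢ Lᵢ 𝟙(Lᵢ ≥ L₍⌈nβ⌉₎)` satisfy
`CV2 = CV1 + ε · L₍⌈nβ⌉₎`. -/
theorem stmt1 (n : ℕ) (hn : 0 < n) (β ε : ℝ) (hβ : 1/2 < β ∧ β < 1)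
    (L : Fin n → ℝ) (σ : Equiv.Perm (Fin n)) (hσ : StrictMono (fun i => L (σ i)))
    (k : ℕ) (hk : k = ⌈(n : ℝ) * β⌉₊) (hk1 : 1 ≤ k) (hkn : k ≤ n)
    (hε : 0 < ε ∧ ε < ((n : ℝ) - k + 1)⁻¹) :
    ∀ G : ℝ → ℝ,
      (G = fun α => (1 - ε) * α + (∑ i, max (L i - α) 0) / ((n : ℝ) - k + 1)) →
      (∑ i, if L (σ ⟨k - 1, by omega⟩) ≤ L i then L i else 0) / ((n : ℝ) - k + 1)
        = sInf (Set.range G) + ε * L (σ ⟨k - 1, by omega⟩) := by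
  intro G hG
  obtain ⟨hε0, hε1⟩ := hε
  have hkn' : k - 1 < n := by omega
  set Lq : ℝ := L (σ ⟨k - 1, hkn'⟩) with hLqdef
  set m : ℝ := (n : ℝ) - k + 1 with hmdef
  have hm : (0:ℝ) < m := by
    have : (k:ℝ) ≤ n := by exact_mod_cast hkn
    rw [hmdef]; linarith
  have hεm : ε * m < 1 := by
    have := mul_lt_mul_of_pos_right hε1 hm
    rwa [inv_mul_cancel₀ hm.ne'] at this
  have hperm : ∀ g : ℝ → ℝ, ∑ j, g (L (σ j)) = ∑ i, g (L i) :=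
    fun g => Equiv.sum_comp σ (fun i => g (L i))
  -- counting lemmas
  have hcount1 : ∑ i, (if Lq ≤ L i then (1:ℝ) else 0) = m := by
    rw [← hperm (fun x => if Lq ≤ x then (1:ℝ) else 0)]
    have heq : ∀ j : Fin n, (if Lq ≤ L (σ j) then (1:ℝ) else 0)
        = (if k - 1 ≤ (j:ℕ) then (1:ℝ) else 0) := by
      intro j
      have : Lq ≤ L (σ j) ↔ k - 1 ≤ (j:ℕ) := by
        rw [hLqdef]
        constructor
        · intro h
          exact hσ.le_iff_le.mp h
        · intro h
          exact hσ.le_iff_le.mpr h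
      simp only [this]
    rw [Finset.sum_congr rfl (fun j _ => heq j)]
    rw [Fin.sum_univ_eq_sum_range (fun a => if k - 1 ≤ a then (1:ℝ) else 0) n]
    rw [Finset.sum_boole]
    have : (Finset.range n).filter (fun a => k - 1 ≤ a) = Finset.Ico (k-1) n := by
      ext a; simp [Finset.mem_filter, Finset.mem_Ico]; omega
    rw [this, Nat.card_Ico, hmdef]
    have h1 : n - (k-1) = n - k + 1 := by omega
    rw [h1]
    push_cast [Nat.cast_sub hkn]
    ring
  have hcount2 : ∑ i, (if Lq < L i then (1:ℝ) else 0) = m - 1 := by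
    rw [← hperm (fun x => if Lq < x then (1:ℝ) else 0)]
    have heq : ∀ j : Fin n, (if Lq < L (σ j) then (1:ℝ) else 0)
        = (if k ≤ (j:ℕ) then (1:ℝ) else 0) := by
      intro j
      have : Lq < L (σ j) ↔ k ≤ (j:ℕ) := by
        rw [hLqdef]
        constructor
        · intro h
          have := hσ.lt_iff_lt.mp h
          have h2 : k - 1 < (j:ℕ) := this
          omega
        · intro h
          exact hσ.lt_iff_lt.mpr (by show k - 1 < (j:ℕ); omega)
      simp only [this]
    rw [Finset.sum_congr rfl (fun j _ => heq j)]
    rw [Fin.sum_univ_eq_sum_range (fun a => if k ≤ a then (1:ℝ) else 0) n]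
    rw [Finset.sum_boole]
    have : (Finset.range n).filter (fun a => k ≤ a) = Finset.Ico k n := by
      ext a; simp [Finset.mem_filter, Finset.mem_Ico]; omega
    rw [this, Nat.card_Ico, hmdef]
    push_cast [Nat.cast_sub hkn]
    ring
  -- minimality
  have hmin : ∀ α, G Lq ≤ G α := by
    intro α
    rw [hG]
    simp only
    rcases le_total α Lq with hle | hle
    · have key : ∀ i : Fin n, max (L i - Lq) 0 + (if Lq ≤ L i then (1:ℝ) else 0) * (Lq - α)
          ≤ max (L i - α) 0 := by
        intro i
        by_cases h : Lq ≤ L i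
        · rw [if_pos h, max_eq_left (by linarith)]
          have := le_max_left (L i - α) (0:ℝ)
          linarith
        · rw [if_neg h]
          push_neg at h
          rw [max_eq_right (by linarith)]
          have := le_max_right (L i - α) (0:ℝ)
          linarith
      have hsum := Finset.sum_le_sum (fun i (_ : i ∈ Finset.univ) => key i)
      rw [Finset.sum_add_distrib, ← Finset.sum_mul, hcount1] at hsum
      rw [← sub_nonneg]
      have hrw : (1 - ε) * α + (∑ i, max (L i - α) 0) / m
          - ((1 - ε) * Lq + (∑ i, max (L i - Lq) 0) / m)
          = ((1 - ε) * (α - Lq) * m + ((∑ i, max (L i - α) 0) - ∑ i, max (L i - Lq) 0)) / m := by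
        field_simp
        ring
      rw [hrw]
      apply div_nonneg _ hm.le
      nlinarith [mul_nonneg (mul_nonneg hε0.le (sub_nonneg.2 hle)) hm.le]
    · have key : ∀ i : Fin n, max (L i - Lq) 0 + (if Lq < L i then (1:ℝ) else 0) * (Lq - α)
          ≤ max (L i - α) 0 := by
        intro i
        by_cases h : Lq < L i
        · rw [if_pos h, max_eq_left (by linarith)]
          have := le_max_left (L i - α) (0:ℝ)
          linarith
        · rw [if_neg h]
          push_neg at h
          rw [max_eq_right (by linarith)]
          have := le_max_right (L i - α) (0:ℝ)
          linarith
      have hsum := Finset.sum_le_sum (fun i (_ : i ∈ Finset.univ) => key i)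
      rw [Finset.sum_add_distrib, ← Finset.sum_mul, hcount2] at hsum
      rw [← sub_nonneg]
      have hrw : (1 - ε) * α + (∑ i, max (L i - α) 0) / m
          - ((1 - ε) * Lq + (∑ i, max (L i - Lq) 0) / m)
          = ((1 - ε) * (α - Lq) * m + ((∑ i, max (L i - α) 0) - ∑ i, max (L i - Lq) 0)) / m := by
        field_simp
        ring
      rw [hrw]
      apply div_nonneg _ hm.le
      nlinarith [mul_nonneg (sub_nonneg.2 hle) (sub_nonneg.2 hεm.le)]
  have hInf : sInf (Set.range G) = G Lq := by
    apply IsLeast.csInf_eq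
    exact ⟨⟨Lq, rfl⟩, by rintro x ⟨α, rfl⟩; exact hmin α⟩
  rw [hInf, hG]
  simp only
  have hS : (∑ i, max (L i - Lq) 0) = (∑ i, if Lq ≤ L i then L i else 0) - m * Lq := by
    have hpt : ∀ i : Fin n, max (L i - Lq) 0
        = (if Lq ≤ L i then L i else 0) - (if Lq ≤ L i then (1:ℝ) else 0) * Lq := by
      intro i
      by_cases h : Lq ≤ L i
      · rw [if_pos h, if_pos h, max_eq_left (by linarith)]; ring
      · rw [if_neg h, if_neg h]
        push_neg at h
        rw [max_eq_right (by linarith)]; ring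
    rw [Finset.sum_congr rfl (fun i _ => hpt i), Finset.sum_sub_distrib, ← Finset.sum_mul,
      hcount1]
  rw [hS]
  field_simp
  ring
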